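/- Characterization of all dual Gabor windows (Wexler–Raz): let Λ be a subgroup of ZMod N × ZMod N and g ∈ ℂ^N such that the Gabor frame operator S_{g,Λ} is invertible, and set g̃ = S_{g,Λ}^{−1} g (the canonical dual window). Then for h ∈ ℂ^N the reconstruction formula f = ∑_{λ∈Λ} ⟨f, π(λ)h⟩ · π(λ)g holds for all f ∈ ℂ^N if and only if ⟨h − g̃, π(μ)g⟩ = 0 for all μ ∈ Λ°. -/

import Mathlib

open Complex Finset
open scoped Classical

/-- The time-frequency shift `π(k,r)` on `ℂ^N ≅ (ZMod N → ℂ)`: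
`(π(k,r)f)(j) = e^{2πi·rj/N} · f(j−k)`. -/
noncomputable def tfShift (N : ℕ) (k r : ZMod N) : (ZMod N → ℂ) →ₗ[ℂ] (ZMod N → ℂ) where
  toFun f := fun j => Complex.exp (2 * Real.pi * Complex.I * (((r * j).val : ℂ) / (N : ℂ))) * f (j - k)
  map_add' f g := by
    funext j
    simp [mul_add]
  map_smul' c f := by
    funext j
    simp [Pi.smul_apply, smul_eq_mul]
    ring

/-- The inner product `⟨f,g⟩ = ∑ⱼ f(j)·conj(g(j))`, linear in the first argument. -/
noncomputable def inn {N : ℕ} [NeZero N] (f g : ZMod N → ℂ) : ℂ :=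
  ∑ j, f j * starRingEnd ℂ (g j)

/-- The short-time Fourier transform `V_g f(k,r) = ⟨f, π(k,r)g⟩`. -/
noncomputable def stft {N : ℕ} [NeZero N] (g f : ZMod N → ℂ) (k r : ZMod N) : ℂ :=
  inn f (tfShift N k r g)

/-- The adjoint subgroup `Λ° = {(k,r) : l·r − k·s = 0 in ZMod N for all (l,s) ∈ Λ}`,
as a set. -/
def adjSet {N : ℕ} (Λ : AddSubgroup (ZMod N × ZMod N)) : Set (ZMod N × ZMod N) :=
  {p | ∀ q ∈ Λ, q.1 * p.2 - p.1 * q.2 = 0}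

/-- The underlying finite set of a subgroup `Λ` of `ZMod N × ZMod N`. -/
noncomputable def subFinset {N : ℕ} [NeZero N] (Λ : AddSubgroup (ZMod N × ZMod N)) :
    Finset (ZMod N × ZMod N) :=
  Set.Finite.toFinset (Set.toFinite (Λ : Set (ZMod N × ZMod N)))

/-- The underlying finite set of the adjoint subgroup `Λ°`. -/
noncomputable def adjFinset {N : ℕ} [NeZero N] (Λ : AddSubgroup (ZMod N × ZMod N)) :
    Finset (ZMod N × ZMod N) :=
  Set.Finite.toFinset (Set.toFinite (adjSet Λ))

/-- The rank-one operator `f ↦ ⟨f,h⟩·g`. -/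
noncomputable def rankOne {N : ℕ} [NeZero N] (g h : ZMod N → ℂ) :
    (ZMod N → ℂ) →ₗ[ℂ] (ZMod N → ℂ) where
  toFun f := inn f h • g
  map_add' f f' := by
    simp [inn, add_mul, Finset.sum_add_distrib, add_smul]
  map_smul' c f := by
    simp [inn, Finset.mul_sum, mul_assoc, mul_smul, smul_smul]

/-- The Gabor frame-type operator `S_{g,h,Λ} f = ∑_{λ∈Λ} ⟨f, π(λ)h⟩ · π(λ)g`. -/
noncomputable def gaborTypeOp (N : ℕ) [NeZero N] (Λ : AddSubgroup (ZMod N × ZMod N))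
    (g h : ZMod N → ℂ) : (ZMod N → ℂ) →ₗ[ℂ] (ZMod N → ℂ) :=
  ∑ lam ∈ subFinset Λ, rankOne (tfShift N lam.1 lam.2 g) (tfShift N lam.1 lam.2 h)

noncomputable def eN (N : ℕ) (x : ZMod N) : ℂ :=
  Complex.exp (2 * Real.pi * Complex.I * ((x.val : ℂ) / (N : ℂ)))

set_option linter.unusedSectionVars false

section
variable {N : ℕ} [NeZero N]


lemma eN_key (a b : ℕ) (hab : (a : ZMod N) = (b : ZMod N)) :
    Complex.exp (2 * Real.pi * Complex.I * ((a:ℂ)/(N:ℂ)))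
    = Complex.exp (2 * Real.pi * Complex.I * ((b:ℂ)/(N:ℂ))) := by
  have hN : (N : ℂ) ≠ 0 := Nat.cast_ne_zero.mpr (NeZero.ne N)
  have hdvd : (N:ℤ) ∣ (a:ℤ) - b := by
    rwa [← ZMod.intCast_zmod_eq_zero_iff_dvd, Int.cast_sub, sub_eq_zero, Int.cast_natCast,
      Int.cast_natCast]
  obtain ⟨n, hn⟩ := hdvd
  rw [Complex.exp_eq_exp_iff_exists_int]
  refine ⟨n, ?_⟩
  have hC : (a:ℂ) = (b:ℂ) + (N:ℂ) * (n:ℂ) := by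
    have : (a:ℤ) = (b:ℤ) + N * n := by linarith
    exact_mod_cast congrArg (Int.cast : ℤ → ℂ) this
  rw [hC]
  field_simp

lemma eN_zero : eN N (0 : ZMod N) = 1 := by
  simp [eN, ZMod.val_zero]

lemma eN_add (x y : ZMod N) : eN N (x + y) = eN N x * eN N y := by
  rw [eN, eN, eN, ← Complex.exp_add]
  have h1 : ((x+y).val : ZMod N) = ((x.val + y.val : ℕ) : ZMod N) := by
    push_cast [ZMod.natCast_val, ZMod.natCast_self]
    simp [ZMod.natCast_val]
  rw [eN_key _ _ h1]
  push_cast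
  ring_nf

lemma eN_mul_eN_neg (x : ZMod N) : eN N x * eN N (-x) = 1 := by
  rw [← eN_add]
  simp [eN_zero]

lemma eN_ne_zero (x : ZMod N) : eN N x ≠ 0 := Complex.exp_ne_zero _

lemma eN_neg (x : ZMod N) : eN N (-x) = (eN N x)⁻¹ :=
  eq_inv_of_mul_eq_one_right (eN_mul_eN_neg x)

lemma conj_eN (x : ZMod N) : starRingEnd ℂ (eN N x) = eN N (-x) := by
  have hc : starRingEnd ℂ (2 * (Real.pi:ℂ) * Complex.I * ((x.val:ℂ)/(N:ℂ)))
      = -(2 * (Real.pi:ℂ) * Complex.I * ((x.val:ℂ)/(N:ℂ))) := by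
    simp only [map_mul, map_div₀, Complex.conj_I, Complex.conj_ofReal, map_ofNat,
      map_natCast]
    ring
  rw [eN_neg]
  simp only [eN]
  rw [← Complex.exp_conj, hc, Complex.exp_neg]

lemma eN_eq_one_iff (x : ZMod N) : eN N x = 1 ↔ x = 0 := by
  constructor
  · intro hx
    rw [eN, Complex.exp_eq_one_iff] at hx
    obtain ⟨n, hn⟩ := hx
    have hπ : (2 * (Real.pi:ℂ) * Complex.I) ≠ 0 := by
      simp [Real.pi_ne_zero, Complex.I_ne_zero, Complex.ofReal_ne_zero]
    have hN : (N : ℂ) ≠ 0 := Nat.cast_ne_zero.mpr (NeZero.ne N)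
    have h2 : ((x.val:ℂ)/(N:ℂ)) = (n:ℂ) := by
      apply mul_left_cancel₀ hπ
      rw [hn]; ring
    have h3 : (x.val : ℂ) = (n:ℂ) * N := (div_eq_iff hN).mp h2
    have h4 : (x.val : ℤ) = n * N := by exact_mod_cast h3
    have h5 : x.val < N := ZMod.val_lt x
    have h6 : n = 0 := by
      rcases lt_trichotomy n 0 with h|h|h
      · nlinarith [h4, Int.ofNat_nonneg x.val]
      · exact h
      · have : (N:ℤ) ≤ n * N := le_mul_of_one_le_left (by positivity) (by omega)
        omega
    rw [h6, zero_mul] at h4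
    have h7 : x.val = 0 := by exact_mod_cast h4
    exact (ZMod.val_eq_zero x).mp h7
  · rintro rfl; exact eN_zero


lemma tfShift_apply (k r : ZMod N) (f : ZMod N → ℂ) (j : ZMod N) :
    tfShift N k r f j = eN N (r * j) * f (j - k) := rfl

lemma conj_inn (f g : ZMod N → ℂ) : starRingEnd ℂ (inn f g) = inn g f := by
  simp [inn, map_sum, map_mul, mul_comm]

lemma inn_smul_right (c : ℂ) (f g : ZMod N → ℂ) :
    inn f (c • g) = starRingEnd ℂ c * inn f g := by
  simp [inn, Finset.mul_sum, map_mul]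
  exact Finset.sum_congr rfl fun j _ => by ring

lemma inn_sub_right (f g h : ZMod N → ℂ) : inn f (g - h) = inn f g - inn f h := by
  simp [inn, map_sub, mul_sub, Finset.sum_sub_distrib]

lemma inn_sum_left {α : Type*} (s : Finset α) (v : α → ZMod N → ℂ) (w : ZMod N → ℂ) :
    inn (∑ i ∈ s, v i) w = ∑ i ∈ s, inn (v i) w := by
  simp only [inn, Finset.sum_apply, Finset.sum_mul]
  exact Finset.sum_comm

lemma inn_smul_left (c : ℂ) (f g : ZMod N → ℂ) : inn (c • f) g = c * inn f g := by
  simp [inn, Finset.mul_sum, mul_assoc]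

lemma tfShift_unitary (k r : ZMod N) (f g : ZMod N → ℂ) :
    inn (tfShift N k r f) (tfShift N k r g) = inn f g := by
  simp only [inn, tfShift_apply, map_mul, conj_eN]
  have h1 : ∀ j : ZMod N,
      eN N (r*j) * f (j-k) * (eN N (-(r*j)) * starRingEnd ℂ (g (j-k)))
        = f (j-k) * starRingEnd ℂ (g (j-k)) := by
    intro j
    linear_combination f (j-k) * starRingEnd ℂ (g (j-k)) * eN_mul_eN_neg (r*j)
  rw [Finset.sum_congr rfl fun j _ => h1 j]
  exact Fintype.sum_equiv (Equiv.subRight k) _ _ fun j => rfl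

lemma tfShift_comp (k r l s : ZMod N) (f : ZMod N → ℂ) :
    tfShift N k r (tfShift N l s f) = eN N (-(s*k)) • tfShift N (k+l) (r+s) f := by
  funext j
  simp only [tfShift_apply, Pi.smul_apply, smul_eq_mul]
  rw [show j - k - l = j - (k+l) by ring]
  have hph : eN N (r*j) * eN N (s*(j-k)) = eN N (-(s*k)) * eN N ((r+s)*j) := by
    rw [← eN_add, ← eN_add]
    congr 1
    ring
  linear_combination f (j - (k+l)) * hph

lemma sum_eN (c : ZMod N) : ∑ r : ZMod N, eN N (r * c) = if c = 0 then (N:ℂ) else 0 := by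
  split_ifs with hc
  · subst hc
    simp [eN_zero, ZMod.card]
  · have h1 : eN N c ≠ 1 := fun h => hc ((eN_eq_one_iff c).mp h)
    have h2 : ∑ r : ZMod N, eN N (r * c) = eN N c * ∑ r : ZMod N, eN N (r * c) := by
      rw [Finset.mul_sum]
      calc ∑ r : ZMod N, eN N (r * c) = ∑ r : ZMod N, eN N ((r + 1) * c) :=
            (Equiv.sum_comp (Equiv.addRight (1 : ZMod N)) (fun r => eN N (r * c))).symm
        _ = ∑ r : ZMod N, eN N c * eN N (r * c) := by
            refine Finset.sum_congr rfl fun r _ => ?_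
            rw [show (r+1)*c = c + r*c by ring, eN_add]
    have h3 : (1 - eN N c) * (∑ r : ZMod N, eN N (r * c)) = 0 := by
      rw [sub_mul, one_mul]
      linear_combination h2
    rcases mul_eq_zero.mp h3 with h | h
    · exact absurd (by linear_combination -h : eN N c = 1) h1
    · exact h

lemma mem_subFinset {Λ : AddSubgroup (ZMod N × ZMod N)} {x : ZMod N × ZMod N} :
    x ∈ subFinset Λ ↔ x ∈ Λ := Set.Finite.mem_toFinset _

lemma sum_subFinset_translate {M : Type*} [AddCommMonoid M]
    (Λ : AddSubgroup (ZMod N × ZMod N)) {q : ZMod N × ZMod N}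
    (hq : q ∈ Λ) (F : ZMod N × ZMod N → M) :
    ∑ x ∈ subFinset Λ, F x = ∑ x ∈ subFinset Λ, F (q + x) := by
  refine Finset.sum_nbij' (fun x => x - q) (fun x => q + x) ?_ ?_ ?_ ?_ ?_
  · intro a ha; rw [mem_subFinset] at *; exact AddSubgroup.sub_mem _ ha hq
  · intro a ha; rw [mem_subFinset] at *; exact AddSubgroup.add_mem _ hq ha
  · intro a _; simp
  · intro a _; simp
  · intro a _; simp

lemma chi_sum (Λ : AddSubgroup (ZMod N × ZMod N)) (k r : ZMod N) :
    ∑ x ∈ subFinset Λ, eN N (x.2 * k - r * x.1)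
      = if (k, r) ∈ adjSet Λ then ((subFinset Λ).card : ℂ) else 0 := by
  by_cases hμ : (k, r) ∈ adjSet Λ
  · rw [if_pos hμ]
    have : ∀ x ∈ subFinset Λ, eN N (x.2 * k - r * x.1) = 1 := by
      intro x hx
      have h0 : x.1 * r - k * x.2 = 0 := hμ x (mem_subFinset.mp hx)
      rw [show x.2 * k - r * x.1 = -(x.1 * r - k * x.2) by ring, h0, neg_zero, eN_zero]
    rw [Finset.sum_congr rfl this]
    simp
  · rw [if_neg hμ]
    rw [adjSet, Set.mem_setOf_eq] at hμ
    push_neg at hμ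
    obtain ⟨q, hqΛ, hq⟩ := hμ
    have hc : q.2 * k - r * q.1 ≠ 0 := fun h => hq (by linear_combination -h)
    have h1 : eN N (q.2 * k - r * q.1) ≠ 1 := fun h => hc ((eN_eq_one_iff _).mp h)
    have h2 : ∑ x ∈ subFinset Λ, eN N (x.2 * k - r * x.1)
        = eN N (q.2 * k - r * q.1) * ∑ x ∈ subFinset Λ, eN N (x.2 * k - r * x.1) := by
      rw [Finset.mul_sum]
      rw [sum_subFinset_translate Λ hqΛ (fun x => eN N (x.2 * k - r * x.1))]
      refine Finset.sum_congr rfl fun x _ => ?_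
      rw [show (q + x).2 * k - r * (q + x).1 = (q.2*k - r*q.1) + (x.2*k - r*x.1) by
        simp [Prod.fst_add, Prod.snd_add]; ring, eN_add]
    have h3 : (1 - eN N (q.2*k - r*q.1)) * (∑ x ∈ subFinset Λ, eN N (x.2 * k - r * x.1)) = 0 := by
      rw [sub_mul, one_mul]; linear_combination h2
    rcases mul_eq_zero.mp h3 with h | h
    · exact absurd (by linear_combination -h : eN N (q.2*k-r*q.1) = 1) h1
    · exact h


end

/-- matrix entries of the Gabor-type operator -/
noncomputable def Mmat (N : ℕ) [NeZero N] (Λ : AddSubgroup (ZMod N × ZMod N))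
    (g u : ZMod N → ℂ) (a b : ZMod N) : ℂ :=
  ∑ x ∈ subFinset Λ, tfShift N x.1 x.2 g a * starRingEnd ℂ (tfShift N x.1 x.2 u b)

/-- twisted Fourier coefficients -/
noncomputable def tcoef (N : ℕ) [NeZero N] (Λ : AddSubgroup (ZMod N × ZMod N))
    (g u : ZMod N → ℂ) (k r : ZMod N) : ℂ :=
  ∑ j, eN N (-(r*j)) * Mmat N Λ g u j (j - k)

section
variable {N : ℕ} [NeZero N]

lemma rankOne_apply (g h f : ZMod N → ℂ) : rankOne g h f = inn f h • g := rfl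

lemma gabor_apply (Λ : AddSubgroup (ZMod N × ZMod N)) (g u f : ZMod N → ℂ) (a : ZMod N) :
    gaborTypeOp N Λ g u f a = ∑ b, Mmat N Λ g u a b * f b := by
  rw [gaborTypeOp, LinearMap.sum_apply, Finset.sum_apply]
  simp only [rankOne_apply, Pi.smul_apply, smul_eq_mul, inn, Finset.sum_mul]
  rw [Finset.sum_comm]
  refine Finset.sum_congr rfl fun b _ => ?_
  rw [Mmat, Finset.sum_mul]
  exact Finset.sum_congr rfl fun x _ => by ring

lemma tcoef_eq (Λ : AddSubgroup (ZMod N × ZMod N)) (g u : ZMod N → ℂ) (k r : ZMod N) :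
    tcoef N Λ g u k r
      = (if (k,r) ∈ adjSet Λ then ((subFinset Λ).card : ℂ) else 0)
          * (eN N (-(r*k)) * starRingEnd ℂ (inn u (tfShift N (-k) (-r) g))) := by
  have hD : starRingEnd ℂ (inn u (tfShift N (-k) (-r) g))
      = eN N (r*k) * ∑ j, eN N (-(r*j)) * g j * starRingEnd ℂ (u (j-k)) := by
    rw [conj_inn]
    have expand : inn (tfShift N (-k) (-r) g) u
        = ∑ j, eN N ((-r)*j) * g (j + k) * starRingEnd ℂ (u j) := by
      rw [inn]
      refine Finset.sum_congr rfl fun j _ => ?_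
      rw [tfShift_apply, sub_neg_eq_add]
    rw [expand, Finset.mul_sum]
    rw [(Equiv.sum_comp (Equiv.subRight k)
      (fun j => eN N ((-r)*j) * g (j + k) * starRingEnd ℂ (u j))).symm]
    refine Finset.sum_congr rfl fun j _ => ?_
    simp only [Equiv.subRight_apply]
    have hph : eN N ((-r)*(j-k)) = eN N (r*k) * eN N (-(r*j)) := by
      rw [← eN_add]; congr 1; ring
    rw [sub_add_cancel, hph]
    ring
  -- main computation
  rw [tcoef]
  have step1 : ∀ j : ZMod N, eN N (-(r*j)) * Mmat N Λ g u j (j - k)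
      = ∑ x ∈ subFinset Λ,
          eN N (-(r*j)) * (eN N (x.2*j) * g (j - x.1)
            * (eN N (-(x.2*(j-k))) * starRingEnd ℂ (u (j - k - x.1)))) := by
    intro j
    rw [Mmat, Finset.mul_sum]
    refine Finset.sum_congr rfl fun x _ => ?_
    rw [tfShift_apply, tfShift_apply, map_mul, conj_eN]
  rw [Finset.sum_congr rfl fun j _ => step1 j, Finset.sum_comm]
  have step2 : ∀ x : ZMod N × ZMod N,
      (∑ j, eN N (-(r*j)) * (eN N (x.2*j) * g (j - x.1)
          * (eN N (-(x.2*(j-k))) * starRingEnd ℂ (u (j - k - x.1)))))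
        = eN N (x.2*k - r*x.1) * ∑ j, eN N (-(r*j)) * g j * starRingEnd ℂ (u (j-k)) := by
    intro x
    rw [Finset.mul_sum]
    rw [← (Equiv.sum_comp (Equiv.addRight x.1)
      (fun j => eN N (-(r*j)) * (eN N (x.2*j) * g (j - x.1)
        * (eN N (-(x.2*(j-k))) * starRingEnd ℂ (u (j - k - x.1))))))]
    refine Finset.sum_congr rfl fun j _ => ?_
    simp only [Equiv.coe_addRight]
    have hph : eN N (-(r*(j+x.1))) * eN N (x.2*(j+x.1)) * eN N (-(x.2*(j+x.1-k)))
        = eN N (x.2*k - r*x.1) * eN N (-(r*j)) := by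
      rw [← eN_add, ← eN_add, ← eN_add]; congr 1; ring
    have h1 : j + x.1 - x.1 = j := by ring
    have h2 : j + x.1 - k - x.1 = j - k := by ring
    rw [h1, h2]
    linear_combination (g j * starRingEnd ℂ (u (j-k))) * hph
  rw [Finset.sum_congr rfl fun x _ => step2 x, ← Finset.sum_mul, chi_sum, hD]
  have := eN_mul_eN_neg (r*k)
  set c := (if (k,r) ∈ adjSet Λ then ((subFinset Λ).card : ℂ) else 0)
  set D := ∑ j, eN N (-(r*j)) * g j * starRingEnd ℂ (u (j-k))
  linear_combination (-(c * D)) * eN_mul_eN_neg (r*k)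

lemma Minv (Λ : AddSubgroup (ZMod N × ZMod N)) (g u : ZMod N → ℂ) (a b : ZMod N) :
    (N:ℂ) * Mmat N Λ g u a b = ∑ r : ZMod N, tcoef N Λ g u (a-b) r * eN N (r*a) := by
  have step : ∀ r : ZMod N, tcoef N Λ g u (a-b) r * eN N (r*a)
      = ∑ j, Mmat N Λ g u j (j - (a-b)) * eN N (r*(a-j)) := by
    intro r
    rw [tcoef, Finset.sum_mul]
    refine Finset.sum_congr rfl fun j _ => ?_
    have hph : eN N (-(r*j)) * eN N (r*a) = eN N (r*(a-j)) := by
      rw [← eN_add]; congr 1; ring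
    linear_combination Mmat N Λ g u j (j - (a-b)) * hph
  rw [Finset.sum_congr rfl fun r _ => step r, Finset.sum_comm]
  have inner : ∀ j : ZMod N,
      (∑ r : ZMod N, Mmat N Λ g u j (j - (a-b)) * eN N (r*(a-j)))
        = Mmat N Λ g u j (j - (a-b)) * (if a - j = 0 then (N:ℂ) else 0) := by
    intro j
    rw [← Finset.mul_sum]
    congr 1
    exact sum_eN (a - j)
  rw [Finset.sum_congr rfl fun j _ => inner j]
  have : ∀ j : ZMod N, Mmat N Λ g u j (j - (a-b)) * (if a - j = 0 then (N:ℂ) else 0)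
      = if j = a then (N:ℂ) * Mmat N Λ g u j (j - (a-b)) else 0 := by
    intro j
    by_cases hj : j = a
    · subst hj; rw [if_pos (sub_self j), if_pos rfl]; ring
    · rw [if_neg (fun hc => hj (by linear_combination -hc)), if_neg hj, mul_zero]
  rw [Finset.sum_congr rfl fun j _ => this j, Finset.sum_ite_eq' Finset.univ a]
  rw [if_pos (Finset.mem_univ a)]
  have : a - (a - b) = b := by ring
  rw [this]

lemma adjSet_neg {Λ : AddSubgroup (ZMod N × ZMod N)} {μ : ZMod N × ZMod N}
    (hμ : μ ∈ adjSet Λ) : (-μ.1, -μ.2) ∈ adjSet Λ := by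
  intro q hq
  have := hμ q hq
  simp only
  linear_combination -this

lemma card_subFinset_ne_zero (Λ : AddSubgroup (ZMod N × ZMod N)) :
    ((subFinset Λ).card : ℂ) ≠ 0 := by
  have h0 : (0 : ZMod N × ZMod N) ∈ subFinset Λ := mem_subFinset.mpr (zero_mem _)
  have : 0 < (subFinset Λ).card := Finset.card_pos.mpr ⟨0, h0⟩
  exact Nat.cast_ne_zero.mpr this.ne'

lemma core_equiv (Λ : AddSubgroup (ZMod N × ZMod N)) (g u : ZMod N → ℂ) :
    (∀ f, gaborTypeOp N Λ g u f = 0) ↔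
      (∀ μ ∈ adjSet Λ, inn u (tfShift N μ.1 μ.2 g) = 0) := by
  constructor
  · intro h0 μ hμ
    have hM : ∀ a b, Mmat N Λ g u a b = 0 := by
      intro a b
      have := congrFun (h0 (fun x => if x = b then 1 else 0)) a
      rw [gabor_apply] at this
      simpa using this
    have hneg : (-μ.1, -μ.2) ∈ adjSet Λ := adjSet_neg hμ
    have ht : tcoef N Λ g u (-μ.1) (-μ.2) = 0 := by
      rw [tcoef]
      simp [hM]
    rw [tcoef_eq, if_pos hneg, neg_neg, neg_neg] at ht
    rcases mul_eq_zero.mp ht with h | h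
    · exact absurd h (card_subFinset_ne_zero Λ)
    · rcases mul_eq_zero.mp h with h | h
      · exact absurd h (eN_ne_zero _)
      · exact (map_eq_zero _).mp h
  · intro hb f
    have hM : ∀ a b, Mmat N Λ g u a b = 0 := by
      intro a b
      have hNne : (N:ℂ) ≠ 0 := Nat.cast_ne_zero.mpr (NeZero.ne N)
      have ht : ∀ r : ZMod N, tcoef N Λ g u (a-b) r = 0 := by
        intro r
        by_cases hmem : (a-b, r) ∈ adjSet Λ
        · rw [tcoef_eq]
          have hneg : (-(a-b), -r) ∈ adjSet Λ := adjSet_neg (μ := (a-b, r)) hmem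
          have := hb _ hneg
          simp only at this
          rw [this, map_zero, mul_zero, mul_zero]
        · rw [tcoef_eq, if_neg hmem, zero_mul]
      have := Minv Λ g u a b
      rw [Finset.sum_congr rfl fun r _ => by rw [ht r, zero_mul]] at this
      rw [Finset.sum_const, smul_zero] at this
      exact (mul_eq_zero.mp this).resolve_left hNne
    funext a
    rw [gabor_apply]
    simp [hM]

end

section
variable {N : ℕ} [NeZero N]

lemma inn_sum_right {α : Type*} (s : Finset α) (w : ZMod N → ℂ) (v : α → ZMod N → ℂ) :
    inn w (∑ i ∈ s, v i) = ∑ i ∈ s, inn w (v i) := by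
  simp only [inn, Finset.sum_apply, map_sum, Finset.mul_sum]
  exact Finset.sum_comm

lemma S_comm (Λ : AddSubgroup (ZMod N × ZMod N)) (g : ZMod N → ℂ)
    {x₀ : ZMod N × ZMod N} (hx₀ : x₀ ∈ Λ) (f : ZMod N → ℂ) :
    gaborTypeOp N Λ g g (tfShift N x₀.1 x₀.2 f) = tfShift N x₀.1 x₀.2 (gaborTypeOp N Λ g g f) := by
  simp only [gaborTypeOp, LinearMap.sum_apply, rankOne_apply]
  rw [map_sum]
  rw [sum_subFinset_translate Λ hx₀
    (fun x => inn (tfShift N x₀.1 x₀.2 f) (tfShift N x.1 x.2 g) • tfShift N x.1 x.2 g)]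
  refine Finset.sum_congr rfl fun x _ => ?_
  rw [map_smul]
  have hcomp : tfShift N (x₀ + x).1 (x₀ + x).2 g
      = eN N (x.2 * x₀.1) • tfShift N x₀.1 x₀.2 (tfShift N x.1 x.2 g) := by
    rw [tfShift_comp]
    rw [smul_smul]
    have : eN N (x.2 * x₀.1) * eN N (-(x.2 * x₀.1)) = 1 := eN_mul_eN_neg _
    rw [this, one_smul]
    rfl
  rw [hcomp, inn_smul_right, conj_eN, smul_smul]
  congr 1
  rw [tfShift_unitary]
  linear_combination inn f (tfShift N x.1 x.2 g) * eN_mul_eN_neg (x.2 * x₀.1)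

lemma S_selfadj (Λ : AddSubgroup (ZMod N × ZMod N)) (g f f' : ZMod N → ℂ) :
    inn (gaborTypeOp N Λ g g f) f' = inn f (gaborTypeOp N Λ g g f') := by
  simp only [gaborTypeOp, LinearMap.sum_apply, rankOne_apply]
  rw [inn_sum_left, inn_sum_right]
  refine Finset.sum_congr rfl fun x _ => ?_
  rw [inn_smul_left, inn_smul_right, ← conj_inn (f')]
  rw [conj_inn]
  ring

lemma gabor_window_sub (Λ : AddSubgroup (ZMod N × ZMod N)) (g h₁ h₂ f : ZMod N → ℂ) :
    gaborTypeOp N Λ g (h₁ - h₂) f = gaborTypeOp N Λ g h₁ f - gaborTypeOp N Λ g h₂ f := by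
  simp only [gaborTypeOp, LinearMap.sum_apply, rankOne_apply]
  rw [← Finset.sum_sub_distrib]
  refine Finset.sum_congr rfl fun x _ => ?_
  rw [map_sub, inn_sub_right, sub_smul]

end

/-- **Characterization of all dual Gabor windows (Wexler–Raz)**: assume the Gabor frame
operator `S_{g,Λ} = S_{g,g,Λ}` is invertible and let `g̃ = S_{g,Λ}⁻¹ g` be the canonical dual
window. Then `h` satisfies the reconstruction formula `f = ∑_{λ∈Λ} ⟨f, π(λ)h⟩ · π(λ)g` for
all `f ∈ ℂ^N` if and only if `⟨h − g̃, π(μ)g⟩ = 0` for all `μ ∈ Λ°`. -/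
theorem dual_window_characterization (N : ℕ) [NeZero N]
    (Λ : AddSubgroup (ZMod N × ZMod N)) (g : ZMod N → ℂ)
    (hS : IsUnit (gaborTypeOp N Λ g g)) (h : ZMod N → ℂ) :
    (∀ f : ZMod N → ℂ, gaborTypeOp N Λ g h f = f) ↔
      ∀ mu ∈ adjSet Λ,
        inn (h - (↑hS.unit⁻¹ : (ZMod N → ℂ) →ₗ[ℂ] (ZMod N → ℂ)) g)
          (tfShift N mu.1 mu.2 g) = 0 := by
  set T : (ZMod N → ℂ) →ₗ[ℂ] (ZMod N → ℂ) := (↑hS.unit⁻¹ : (ZMod N → ℂ) →ₗ[ℂ] (ZMod N → ℂ))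
    with hT
  have hST : ∀ x, gaborTypeOp N Λ g g (T x) = x := by
    intro x
    have h1 : (hS.unit : (ZMod N → ℂ) →ₗ[ℂ] (ZMod N → ℂ)) * T = 1 := hS.unit.mul_inv
    have := congrArg (fun L => L x) h1
    simpa [Module.End.mul_apply, hS.unit_spec] using this
  have hTS : ∀ x, T (gaborTypeOp N Λ g g x) = x := by
    intro x
    have h1 : T * (hS.unit : (ZMod N → ℂ) →ₗ[ℂ] (ZMod N → ℂ)) = 1 := hS.unit.inv_mul
    have := congrArg (fun L => L x) h1
    simpa [Module.End.mul_apply, hS.unit_spec] using this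
  have hTcomm : ∀ x₀ ∈ Λ, ∀ v, tfShift N x₀.1 x₀.2 (T v) = T (tfShift N x₀.1 x₀.2 v) := by
    intro x₀ hx₀ v
    calc tfShift N x₀.1 x₀.2 (T v)
        = T (gaborTypeOp N Λ g g (tfShift N x₀.1 x₀.2 (T v))) := (hTS _).symm
      _ = T (tfShift N x₀.1 x₀.2 (gaborTypeOp N Λ g g (T v))) := by
          rw [S_comm Λ g hx₀ (T v)]
      _ = T (tfShift N x₀.1 x₀.2 v) := by rw [hST v]
  have hTadj : ∀ f f', inn (T f) f' = inn f (T f') := by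
    intro f f'
    calc inn (T f) f' = inn (T f) (gaborTypeOp N Λ g g (T f')) := by rw [hST]
      _ = inn (gaborTypeOp N Λ g g (T f)) (T f') := (S_selfadj Λ g _ _).symm
      _ = inn f (T f') := by rw [hST]
  have hC : ∀ f, gaborTypeOp N Λ g (T g) f = f := by
    intro f
    have key : gaborTypeOp N Λ g (T g) f = gaborTypeOp N Λ g g (T f) := by
      simp only [gaborTypeOp, LinearMap.sum_apply, rankOne_apply]
      refine Finset.sum_congr rfl fun x hx => ?_
      rw [hTcomm x (mem_subFinset.mp hx) g, ← hTadj]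
    rw [key, hST]
  constructor
  · intro hrec
    refine (core_equiv Λ g (h - T g)).mp ?_
    intro f
    rw [gabor_window_sub, hrec f, hC f, sub_self]
  · intro hbi f
    have h0 := (core_equiv Λ g (h - T g)).mpr hbi f
    rw [gabor_window_sub, hC f] at h0
    have := sub_eq_zero.mp h0
    exact this
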